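/- Fix an integer j₀ ≥ 2, let C = { Σ_{i∈F} ε_i e_i : F ⊂ ℕ finite, card F ≤ n_{j₀−1}, ε_i ∈ {−1,1} }, and let E be the smallest subset of c₀₀ containing C and closed under the operations: for every j ≥ 1 with j ≠ j₀ and every f_1 < f_2 < ⋯ < f_d in E with d ≤ 5·n_j, the element (1/m_j)(f_1 + ⋯ + f_d) belongs to E. Then for every f ∈ E and every choice of natural numbers k_1 < ⋯ < k_{n_{j₀}}, one has |f( (1/n_{j₀}) Σ_{l=1}^{n_{j₀}} e_{k_l} )| ≤ 1/m_{j₀}². -/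

import Mathlib

noncomputable section

/-- The sequence `m_j`: `m 1 = 2`, `m (j+1) = (m j)^5`, i.e. `m j = 2 ^ 5 ^ (j-1)`. -/
def mseq (j : ℕ) : ℕ := 2 ^ 5 ^ (j - 1)

/-- The sequence `n_j`: `n 1 = 4` and `n (j+1) = (5 n_j) ^ (3 · 5^j)`. -/
def nseq : ℕ → ℕ
  | 0 => 1
  | 1 => 4
  | (j + 2) => (5 * nseq (j + 1)) ^ (3 * 5 ^ (j + 1))

/-- `f < g` for finitely supported functions: every element of the support of `f` is
less than every element of the support of `g`. -/
def BlockLt (f g : ℕ →₀ ℝ) : Prop :=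
  ∀ a ∈ f.support, ∀ b ∈ g.support, a < b

/-- The action of `f ∈ c₀₀` on `x ∈ c₀₀`: `f(x) = ∑ k, f k * x k`. -/
def fapply (f x : ℕ →₀ ℝ) : ℝ := x.sum fun i v => f i * v

/-- The smallest subset `E` of `c₀₀` containing the set
`C = {∑_{i ∈ F} ±e_i : card F ≤ n_{j₀-1}}` and closed under the
`(𝓐_{5 n_j}, 1/m_j)` operations for all `j ≥ 1` with `j ≠ j₀`. -/
inductive Eset (j₀ : ℕ) : (ℕ →₀ ℝ) → Prop
  | base (h : ℕ →₀ ℝ) (hcard : h.support.card ≤ nseq (j₀ - 1))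
      (hval : ∀ k ∈ h.support, h k = 1 ∨ h k = -1) : Eset j₀ h
  | op (j d : ℕ) (hj : 1 ≤ j) (hne : j ≠ j₀) (hd : d ≤ 5 * nseq j) (f : Fin d → (ℕ →₀ ℝ))
      (hmem : ∀ i, Eset j₀ (f i))
      (hblock : ∀ i i' : Fin d, i < i' → BlockLt (f i) (f i')) :
      Eset j₀ ((mseq j : ℝ)⁻¹ • ∑ i, f i)


lemma nseq_pos : ∀ j, 0 < nseq j
  | 0 => by simp [nseq]
  | 1 => by simp [nseq]
  | (j+2) => by
      have := nseq_pos (j+1)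
      simp only [nseq]
      positivity

lemma nseq_le_succ : ∀ j, nseq j ≤ nseq (j+1)
  | 0 => by simp [nseq]
  | (j+1) => by
      show nseq (j+1) ≤ (5 * nseq (j+1)) ^ (3 * 5 ^ (j+1))
      calc nseq (j+1) ≤ 5 * nseq (j+1) := by omega
      _ ≤ (5 * nseq (j+1)) ^ (3 * 5 ^ (j+1)) := Nat.le_self_pow (by positivity) _

lemma nseq_mono : Monotone nseq := monotone_nat_of_le_succ nseq_le_succ

lemma four_le_nseq (j : ℕ) (hj : 1 ≤ j) : 4 ≤ nseq j := nseq_mono hj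

lemma nseq_eq (j₀ : ℕ) (h : 2 ≤ j₀) :
    nseq j₀ = (5 * nseq (j₀ - 1)) ^ (3 * 5 ^ (j₀ - 1)) := by
  obtain ⟨k, rfl⟩ : ∃ k, j₀ = k + 2 := ⟨j₀ - 2, by omega⟩
  show nseq (k+2) = _
  simp only [nseq]
  congr 2 <;> omega

lemma mseq_cast_inv (j : ℕ) : ((mseq j : ℝ))⁻¹ = (1/2 : ℝ) ^ (5 ^ (j-1)) := by
  rw [mseq]
  push_cast
  rw [one_div, inv_pow]

-- disjointness
lemma blockLt_disjoint {f g : ℕ →₀ ℝ} (h : BlockLt f g) : Disjoint f.support g.support := by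
  rw [Finset.disjoint_left]
  intro a haf hag
  exact absurd (h a haf a hag) (lt_irrefl a)

lemma abs_sum_apply_le_one {d : ℕ} (f : Fin d → (ℕ →₀ ℝ))
    (hone : ∀ i k', |f i k'| ≤ 1)
    (hblock : ∀ i i' : Fin d, i < i' → BlockLt (f i) (f i')) (kk : ℕ) :
    |∑ i, f i kk| ≤ 1 := by
  by_cases hex : ∃ i₀, kk ∈ (f i₀).support
  · obtain ⟨i₀, hi₀⟩ := hex
    rw [Finset.sum_eq_single_of_mem i₀ (Finset.mem_univ _) ?_]
    · exact hone i₀ kk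
    · intro i _ hne
      by_contra hno
      have hmem : kk ∈ (f i).support := Finsupp.mem_support_iff.mpr hno
      rcases hne.lt_or_gt with h' | h'
      · exact absurd (hblock i i₀ h' kk hmem kk hi₀) (lt_irrefl kk)
      · exact absurd (hblock i₀ i h' kk hi₀ kk hmem) (lt_irrefl kk)
  · push_neg at hex
    rw [Finset.sum_eq_zero fun i _ => Finsupp.notMem_support_iff.mp (hex i)]
    norm_num

lemma supnorm {j₀ : ℕ} {f : ℕ →₀ ℝ} (hf : Eset j₀ f) : ∀ kk, |f kk| ≤ 1 := by
  induction hf with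
  | base h hcard hval =>
      intro kk
      by_cases hkk : kk ∈ h.support
      · rcases hval kk hkk with h1 | h1 <;> simp [h1]
      · simp [Finsupp.notMem_support_iff.mp hkk]
  | op j d hj hne hd f hmem hblock ih =>
      intro kk
      have h1 : |(∑ i, f i) kk| ≤ 1 := by
        rw [Finsupp.finset_sum_apply]
        exact abs_sum_apply_le_one f ih hblock kk
      have hm : (1:ℝ) ≤ (mseq j : ℝ) := by
        have : 1 ≤ mseq j := Nat.one_le_two_pow
        exact_mod_cast this
      rw [Finsupp.smul_apply, smul_eq_mul, abs_mul, abs_inv, abs_of_nonneg (by positivity)]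
      calc (mseq j : ℝ)⁻¹ * |(∑ i, f i) kk| ≤ 1 * 1 := by
            apply mul_le_mul _ h1 (abs_nonneg _) zero_le_one
            exact inv_le_one_of_one_le₀ hm
      _ = 1 := by ring

lemma half_pow_mul (x : ℝ) (e : ℕ) : (1/2:ℝ)^e * x^e = (x/2)^e := by
  rw [← mul_pow]; ring_nf

lemma key (j₀ : ℕ) (hj₀ : 2 ≤ j₀) (f : ℕ →₀ ℝ) (hf : Eset j₀ f) :
    ∃ (g : ℕ → ℝ) (b : ℝ),
      (∀ t, 0 ≤ g t) ∧
      (∀ t, g t ≤ ((5 * (nseq (j₀-1) : ℝ))/2) ^ t) ∧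
      0 ≤ b ∧ b ≤ (1/2 : ℝ) ^ (3 * 5 ^ (j₀-1)) ∧
      ∀ (A : Finset ℕ) (θ : ℕ), θ ≤ 3 * 5 ^ (j₀-1) →
        |∑ kk ∈ A, f kk| ≤ (nseq (j₀-1) : ℝ) * (∑ t ∈ Finset.range θ, g t)
          + ((1/2 : ℝ) ^ θ + b) * A.card := by
  induction hf with
  | base h hcard hval =>
      have hone : ∀ kk, |h kk| ≤ 1 := by
        intro kk
        by_cases hkk : kk ∈ h.support
        · rcases hval kk hkk with h1 | h1 <;> simp [h1]
        · simp [Finsupp.notMem_support_iff.mp hkk]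
      have hb1 : ∀ A : Finset ℕ, |∑ kk ∈ A, h kk| ≤ (A.card : ℝ) := by
        intro A
        calc |∑ kk ∈ A, h kk| ≤ ∑ kk ∈ A, |h kk| := Finset.abs_sum_le_sum_abs _ _
        _ ≤ ∑ kk ∈ A, (1:ℝ) := Finset.sum_le_sum fun kk _ => hone kk
        _ = (A.card : ℝ) := by rw [Finset.sum_const, nsmul_eq_mul, mul_one]
      have hb2 : ∀ A : Finset ℕ, |∑ kk ∈ A, h kk| ≤ (nseq (j₀-1) : ℝ) := by
        intro A
        have hres : ∑ kk ∈ A, h kk = ∑ kk ∈ A ∩ h.support, h kk :=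
          (Finset.sum_subset Finset.inter_subset_left (fun x hx hnx =>
            Finsupp.notMem_support_iff.mp (fun hs => hnx (Finset.mem_inter.mpr ⟨hx, hs⟩)))).symm
        rw [hres]
        calc |∑ kk ∈ A ∩ h.support, h kk| ≤ ∑ kk ∈ A ∩ h.support, |h kk| :=
              Finset.abs_sum_le_sum_abs _ _
        _ ≤ ∑ kk ∈ A ∩ h.support, (1:ℝ) := Finset.sum_le_sum fun kk _ => hone kk
        _ = ((A ∩ h.support).card : ℝ) := by rw [Finset.sum_const, nsmul_eq_mul, mul_one]
        _ ≤ (h.support.card : ℝ) := by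
              exact_mod_cast Finset.card_le_card Finset.inter_subset_right
        _ ≤ (nseq (j₀-1) : ℝ) := by exact_mod_cast hcard
      refine ⟨fun t => if t = 0 then 1 else 0, 0, ?_, ?_, le_refl 0, by positivity, ?_⟩
      · intro t; dsimp only; split <;> norm_num
      · intro t
        dsimp only
        split
        · next ht => subst ht; norm_num
        · positivity
      · intro A θ hθ
        match θ with
        | 0 =>
            simp only [Finset.range_zero, Finset.sum_empty, mul_zero, zero_add, pow_zero,
              add_zero, one_mul]
            exact hb1 A
        | (θ'+1) =>
            have hsum : ∑ t ∈ Finset.range (θ'+1), (if t = 0 then (1:ℝ) else 0) = 1 := by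
              rw [Finset.sum_ite_eq' (Finset.range (θ'+1)) 0 (fun _ => (1:ℝ))]
              simp
            rw [hsum, mul_one]
            have h2 : (0:ℝ) ≤ ((1/2:ℝ)^(θ'+1) + 0) * A.card := by positivity
            linarith [hb2 A]
  | op j d hj hne hd f hmem hblock ih =>
      have hn'4 : (4:ℝ) ≤ (nseq (j₀-1) : ℝ) := by
        exact_mod_cast four_le_nseq _ (by omega)
      set S := 3 * 5 ^ (j₀-1) with hS
      set n' : ℝ := (nseq (j₀-1) : ℝ) with hn'
      set N : ℝ := 5 * n' with hN
      choose g b hg0 hgle hb0 hble hbound using ih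
      have happ : ∀ A : Finset ℕ, ∑ kk ∈ A, ((mseq j : ℝ)⁻¹ • ∑ i, f i) kk
          = (mseq j : ℝ)⁻¹ * ∑ i, ∑ kk ∈ A, f i kk := by
        intro A
        simp only [Finsupp.smul_apply, Finsupp.finset_sum_apply, smul_eq_mul]
        rw [← Finset.mul_sum, Finset.sum_comm]
      have hrestrict : ∀ (i : Fin d) (A : Finset ℕ),
          ∑ kk ∈ A, f i kk = ∑ kk ∈ A ∩ (f i).support, f i kk := fun i A =>
        (Finset.sum_subset Finset.inter_subset_left (fun x hx hnx =>
          Finsupp.notMem_support_iff.mp (fun hs => hnx (Finset.mem_inter.mpr ⟨hx, hs⟩)))).symm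
      have hcards : ∀ A : Finset ℕ,
          ∑ i, (((A ∩ (f i).support).card : ℝ)) ≤ (A.card : ℝ) := by
        intro A
        have hdisj : ∀ i ∈ Finset.univ, ∀ i' ∈ Finset.univ, i ≠ i' →
            Disjoint (A ∩ (f i).support) (A ∩ (f i').support) := by
          intro i _ i' _ hne'
          rcases hne'.lt_or_gt with h' | h'
          · exact Finset.disjoint_of_subset_left Finset.inter_subset_right
              (Finset.disjoint_of_subset_right Finset.inter_subset_right
                (blockLt_disjoint (hblock _ _ h')))
          · exact (Finset.disjoint_of_subset_left Finset.inter_subset_right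
              (Finset.disjoint_of_subset_right Finset.inter_subset_right
                (blockLt_disjoint (hblock _ _ h')))).symm
        have h1 : ∑ i, (A ∩ (f i).support).card
            = (Finset.univ.biUnion (fun i => A ∩ (f i).support)).card :=
          (Finset.card_biUnion hdisj).symm
        have h2 : (Finset.univ.biUnion (fun i => A ∩ (f i).support)) ⊆ A :=
          Finset.biUnion_subset.mpr (fun i _ => Finset.inter_subset_left)
        have : ∑ i, (A ∩ (f i).support).card ≤ A.card := by
          rw [h1]; exact Finset.card_le_card h2
        exact_mod_cast this
      rcases Nat.lt_or_ge j j₀ with hlow | hhigh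
      · -- low weight case : j < j₀
        set E := 5 ^ (j-1) with hE
        have hE1 : 1 ≤ E := Nat.one_le_pow _ _ (by norm_num)
        have hme : (mseq j : ℝ)⁻¹ = (1/2:ℝ)^E := mseq_cast_inv j
        have h5nj : (5 * (nseq j : ℝ)) ≤ N := by
          have : (nseq j : ℝ) ≤ n' := by
            rw [hn']
            exact_mod_cast nseq_mono (by omega : j ≤ j₀ - 1)
          rw [hN]; linarith
        have hN1 : (1:ℝ) ≤ N := by rw [hN]; linarith
        have hNE : N ≤ N^E := le_self_pow₀ hN1 (by omega)
        set g' : ℕ → ℝ := fun t =>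
          if E ≤ t ∧ t < S then (1/2:ℝ)^E * ∑ i, g i (t - E) else 0 with hg'
        have hg'0 : ∀ t, 0 ≤ g' t := by
          intro t
          rw [hg']
          dsimp only
          split
          · have : (0:ℝ) ≤ ∑ i, g i (t - E) := Finset.sum_nonneg fun i _ => hg0 i _
            positivity
          · exact le_refl 0
        have hg'le : ∀ t, g' t ≤ (N/2)^t := by
          intro t
          rw [hg']
          dsimp only
          split
          · next hguard =>
              obtain ⟨hEt, htS⟩ := hguard
              have hd' : (d : ℝ) ≤ 5 * (nseq j : ℝ) := by exact_mod_cast hd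
              calc (1/2:ℝ)^E * ∑ i, g i (t - E)
                  ≤ (1/2:ℝ)^E * ∑ (i : Fin d), (N/2)^(t-E) := by
                    gcongr with i
                    exact hgle i _
              _ = (1/2:ℝ)^E * ((d:ℝ) * (N/2)^(t-E)) := by
                    rw [Finset.sum_const, Finset.card_univ, Fintype.card_fin, nsmul_eq_mul]
              _ ≤ (1/2:ℝ)^E * (N^E * (N/2)^(t-E)) := by
                    refine mul_le_mul_of_nonneg_left
                      (mul_le_mul_of_nonneg_right (hd'.trans (h5nj.trans hNE))
                        (by positivity)) (by positivity)
              _ = (N/2)^E * (N/2)^(t-E) := by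
                    rw [← half_pow_mul N E, mul_assoc]
              _ = (N/2)^t := by rw [← pow_add]; congr 1; omega
          · positivity
        refine ⟨g', (1/2:ℝ)^S, hg'0, hg'le, by positivity, le_refl _, ?_⟩
        intro A θ hθ
        have hstart : |∑ kk ∈ A, ((mseq j : ℝ)⁻¹ • ∑ i, f i) kk|
            ≤ (1/2:ℝ)^E * ∑ i, |∑ kk ∈ A ∩ (f i).support, f i kk| := by
          rw [happ A, hme, abs_mul, abs_of_nonneg (by positivity : (0:ℝ) ≤ (1/2:ℝ)^E)]
          gcongr
          calc |∑ i, ∑ kk ∈ A, f i kk| ≤ ∑ i, |∑ kk ∈ A, f i kk| :=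
                Finset.abs_sum_le_sum_abs _ _
          _ = ∑ i, |∑ kk ∈ A ∩ (f i).support, f i kk| := by
                refine Finset.sum_congr rfl fun i _ => ?_
                rw [hrestrict]
        have hchild : ∀ (θc : ℕ), θc ≤ S → ∀ i : Fin d,
            |∑ kk ∈ A ∩ (f i).support, f i kk|
              ≤ n' * (∑ t ∈ Finset.range θc, g i t)
                + ((1/2:ℝ)^θc + (1/2:ℝ)^S) * ((A ∩ (f i).support).card : ℝ) := by
          intro θc hθc i
          refine (hbound i (A ∩ (f i).support) θc hθc).trans ?_
          exact add_le_add (le_refl _) (mul_le_mul_of_nonneg_right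
            (add_le_add (le_refl _) (hble i)) (Nat.cast_nonneg _))
        rcases le_or_gt θ E with hcase | hcase
        · -- θ ≤ E
          have hzero : ∑ t ∈ Finset.range θ, g' t = ∑ t ∈ Finset.range θ, 0 := by
            refine Finset.sum_congr rfl fun t ht => ?_
            rw [hg']
            dsimp only
            rw [if_neg]
            rintro ⟨h1, -⟩
            have := Finset.mem_range.mp ht
            omega
          have hmain : (1/2:ℝ)^E * (1 + (1/2:ℝ)^S) ≤ (1/2:ℝ)^θ + (1/2:ℝ)^S := by
            have e1 : (1/2:ℝ)^E ≤ (1/2:ℝ)^θ := pow_le_pow_of_le_one (by norm_num) (by norm_num) hcase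
            have e2 : (1/2:ℝ)^E ≤ 1 := pow_le_one₀ (by norm_num) (by norm_num)
            nlinarith [pow_nonneg (by norm_num : (0:ℝ) ≤ 1/2) S]
          calc |∑ kk ∈ A, ((mseq j : ℝ)⁻¹ • ∑ i, f i) kk|
              ≤ (1/2:ℝ)^E * ∑ i, |∑ kk ∈ A ∩ (f i).support, f i kk| := hstart
          _ ≤ (1/2:ℝ)^E * ∑ i, (1 + (1/2:ℝ)^S) * ((A ∩ (f i).support).card : ℝ) := by
              refine mul_le_mul_of_nonneg_left (Finset.sum_le_sum fun i _ => ?_)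
                (by positivity)
              have := hchild 0 (Nat.zero_le _) i
              simpa using this
          _ = (1/2:ℝ)^E * (1 + (1/2:ℝ)^S) * ∑ i, ((A ∩ (f i).support).card : ℝ) := by
              rw [← Finset.mul_sum]; ring
          _ ≤ (1/2:ℝ)^E * (1 + (1/2:ℝ)^S) * (A.card : ℝ) :=
              mul_le_mul_of_nonneg_left (hcards A) (by positivity)
          _ ≤ ((1/2:ℝ)^θ + (1/2:ℝ)^S) * (A.card : ℝ) :=
              mul_le_mul_of_nonneg_right hmain (Nat.cast_nonneg _)
          _ ≤ n' * (∑ t ∈ Finset.range θ, g' t) + ((1/2:ℝ)^θ + (1/2:ℝ)^S) * (A.card : ℝ) := by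
              rw [hzero]
              simp
        · -- E < θ
          set θc := θ - E with hθc
          have hEθ : E + θc = θ := by omega
          have hθcS : θc ≤ S := by omega
          have hsplit : (1/2:ℝ)^E * ∑ i, ∑ t ∈ Finset.range θc, g i t
              ≤ ∑ t ∈ Finset.range θ, g' t := by
            have hval : ∀ s ∈ Finset.range θc, g' (E + s) = (1/2:ℝ)^E * ∑ i, g i s := by
              intro s hs
              have hs' := Finset.mem_range.mp hs
              rw [hg']
              dsimp only
              rw [if_pos ⟨Nat.le_add_right _ _, by omega⟩, Nat.add_sub_cancel_left]
            calc (1/2:ℝ)^E * ∑ i, ∑ t ∈ Finset.range θc, g i t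
                = ∑ s ∈ Finset.range θc, g' (E + s) := by
                  rw [Finset.sum_congr rfl hval, ← Finset.mul_sum, Finset.sum_comm]
            _ ≤ ∑ t ∈ Finset.range E, g' t + ∑ s ∈ Finset.range θc, g' (E + s) := by
                  have : (0:ℝ) ≤ ∑ t ∈ Finset.range E, g' t :=
                    Finset.sum_nonneg fun t _ => hg'0 t
                  linarith
            _ = ∑ t ∈ Finset.range θ, g' t := by rw [← hEθ, Finset.sum_range_add]
          have e1 : (1/2:ℝ)^E * (1/2:ℝ)^θc = (1/2:ℝ)^θ := by rw [← pow_add, hEθ]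
          have e2 : (1/2:ℝ)^E * (1/2:ℝ)^S ≤ (1/2:ℝ)^S :=
            mul_le_of_le_one_left (by positivity) (pow_le_one₀ (by norm_num) (by norm_num))
          calc |∑ kk ∈ A, ((mseq j : ℝ)⁻¹ • ∑ i, f i) kk|
              ≤ (1/2:ℝ)^E * ∑ i, |∑ kk ∈ A ∩ (f i).support, f i kk| := hstart
          _ ≤ (1/2:ℝ)^E * ∑ i, (n' * (∑ t ∈ Finset.range θc, g i t)
                + ((1/2:ℝ)^θc + (1/2:ℝ)^S) * ((A ∩ (f i).support).card : ℝ)) :=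
              mul_le_mul_of_nonneg_left
                (Finset.sum_le_sum fun i _ => hchild θc hθcS i) (by positivity)
          _ = n' * ((1/2:ℝ)^E * ∑ i, ∑ t ∈ Finset.range θc, g i t)
                + (1/2:ℝ)^E * (((1/2:ℝ)^θc + (1/2:ℝ)^S)
                  * ∑ i, ((A ∩ (f i).support).card : ℝ)) := by
              rw [Finset.sum_add_distrib, ← Finset.mul_sum, ← Finset.mul_sum]
              ring
          _ ≤ n' * (∑ t ∈ Finset.range θ, g' t)
                + (1/2:ℝ)^E * (((1/2:ℝ)^θc + (1/2:ℝ)^S) * (A.card : ℝ)) := by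
              refine add_le_add (mul_le_mul_of_nonneg_left hsplit (by linarith))
                (mul_le_mul_of_nonneg_left
                  (mul_le_mul_of_nonneg_left (hcards A) (by positivity)) (by positivity))
          _ = (1/2:ℝ)^θ * (A.card : ℝ) + ((1/2:ℝ)^E * (1/2:ℝ)^S) * (A.card : ℝ)
                + n' * (∑ t ∈ Finset.range θ, g' t) := by
              rw [← e1]; ring
          _ ≤ (1/2:ℝ)^θ * (A.card : ℝ) + (1/2:ℝ)^S * (A.card : ℝ)
                + n' * (∑ t ∈ Finset.range θ, g' t) := by
              refine add_le_add (add_le_add_right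
                (mul_le_mul_of_nonneg_right e2 (Nat.cast_nonneg _)) _) (le_refl _)
          _ = n' * (∑ t ∈ Finset.range θ, g' t) + ((1/2:ℝ)^θ + (1/2:ℝ)^S) * (A.card : ℝ) := by
              ring
      · -- high weight case : j₀ < j (since j ≥ j₀ and j ≠ j₀)
        have hj' : j₀ + 1 ≤ j := by omega
        have hSE : S ≤ 5 ^ (j-1) := by
          have h1 : S ≤ 5 ^ j₀ := by
            rw [hS]
            calc 3 * 5 ^ (j₀-1) ≤ 5 * 5 ^ (j₀-1) := by omega
            _ = 5 ^ (j₀ - 1 + 1) := by rw [pow_succ]; ring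
            _ = 5 ^ j₀ := by congr 1; omega
          exact h1.trans (Nat.pow_le_pow_right (by norm_num) (by omega))
        refine ⟨fun _ => 0, (1/2:ℝ)^S, fun t => le_refl 0, fun t => by positivity,
          by positivity, le_refl _, ?_⟩
        intro A θ hθ
        have hone : ∀ kk, |((mseq j : ℝ)⁻¹ • ∑ i, f i) kk| ≤ (1/2:ℝ)^S := by
          intro kk
          rw [Finsupp.smul_apply, smul_eq_mul, abs_mul, abs_inv,
            abs_of_nonneg (by positivity : (0:ℝ) ≤ (mseq j : ℝ)), mseq_cast_inv]
          calc (1/2:ℝ)^(5^(j-1)) * |(∑ i, f i) kk| ≤ (1/2:ℝ)^(5^(j-1)) * 1 := by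
                gcongr
                rw [Finsupp.finset_sum_apply]
                exact abs_sum_apply_le_one f (fun i => supnorm (hmem i)) hblock kk
          _ = (1/2:ℝ)^(5^(j-1)) := mul_one _
          _ ≤ (1/2:ℝ)^S := pow_le_pow_of_le_one (by norm_num) (by norm_num) hSE
        calc |∑ kk ∈ A, ((mseq j : ℝ)⁻¹ • ∑ i, f i) kk|
            ≤ ∑ kk ∈ A, |((mseq j : ℝ)⁻¹ • ∑ i, f i) kk| := Finset.abs_sum_le_sum_abs _ _
        _ ≤ ∑ kk ∈ A, (1/2:ℝ)^S := Finset.sum_le_sum fun kk _ => hone kk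
        _ = (1/2:ℝ)^S * (A.card : ℝ) := by rw [Finset.sum_const, nsmul_eq_mul]; ring
        _ ≤ n' * (∑ t ∈ Finset.range θ, (0:ℝ)) + ((1/2:ℝ)^θ + (1/2:ℝ)^S) * (A.card : ℝ) := by
            have h1 : (1/2:ℝ)^S * (A.card : ℝ) ≤ ((1/2:ℝ)^θ + (1/2:ℝ)^S) * (A.card : ℝ) :=
              mul_le_mul_of_nonneg_right (le_add_of_nonneg_left (by positivity))
                (Nat.cast_nonneg _)
            simpa using h1

lemma geom_bound (r : ℝ) (h : 2 ≤ r) (s : ℕ) : ∑ t ∈ Finset.range (s+1), r^t ≤ 2 * r^s := by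
  induction s with
  | zero => norm_num
  | succ n ih =>
    rw [Finset.sum_range_succ]
    have h0 : (0:ℝ) ≤ r^n := pow_nonneg (by linarith) n
    calc ∑ t ∈ Finset.range (n+1), r^t + r^(n+1) ≤ 2*r^n + r^(n+1) := by linarith
    _ ≤ 2 * r^(n+1) := by rw [pow_succ]; nlinarith

lemma fapply_add (f x y : ℕ →₀ ℝ) : fapply f (x + y) = fapply f x + fapply f y :=
  Finsupp.sum_add_index' (fun i => mul_zero _) (fun i b c => mul_add _ _ _)

lemma fapply_zero (f : ℕ →₀ ℝ) : fapply f 0 = 0 := Finsupp.sum_zero_index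

lemma fapply_single (f : ℕ →₀ ℝ) (a : ℕ) (c : ℝ) :
    fapply f (Finsupp.single a c) = f a * c :=
  Finsupp.sum_single_index (mul_zero _)

/-- For every `f ∈ E` (the saturation avoiding the weight `m_{j₀}`)
and natural numbers `k 0 < k 1 < ⋯` (`n_{j₀}` of them), the action of `f` on the
average `(1/n_{j₀}) ∑ l, e_{k l}` is at most `1/m_{j₀}²` in absolute value. -/
theorem statement17 (j₀ : ℕ) (hj₀ : 2 ≤ j₀) (f : ℕ →₀ ℝ) (hf : Eset j₀ f)
    (k : Fin (nseq j₀) → ℕ) (hk : StrictMono k) :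
    |fapply f ((nseq j₀ : ℝ)⁻¹ • ∑ l, Finsupp.single (k l) (1 : ℝ))|
      ≤ 1 / ((mseq j₀ : ℝ)) ^ 2 := by
  have hP5 : 5 ≤ 5 ^ (j₀ - 1) := by
    calc 5 = 5 ^ 1 := (pow_one 5).symm
    _ ≤ 5 ^ (j₀ - 1) := Nat.pow_le_pow_right (by norm_num) (by omega)
  have hn'4 : (4:ℝ) ≤ (nseq (j₀-1) : ℝ) := by exact_mod_cast four_le_nseq _ (by omega)
  have hnjpos : (0:ℝ) < (nseq j₀ : ℝ) := by exact_mod_cast nseq_pos j₀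
  obtain ⟨g, b, hg0, hgle, hb0, hble, hbound⟩ := key j₀ hj₀ f hf
  set A : Finset ℕ := Finset.image k Finset.univ with hA
  have hAcard : (A.card : ℝ) = (nseq j₀ : ℝ) := by
    rw [hA, Finset.card_image_of_injective _ hk.injective, Finset.card_univ,
      Fintype.card_fin]
  have hAsum : ∑ kk ∈ A, f kk = ∑ l, f (k l) := by
    rw [hA]; exact Finset.sum_image (fun x _ y _ h => hk.injective h)
  have hxrw : ((nseq j₀ : ℝ)⁻¹ • ∑ l, Finsupp.single (k l) (1:ℝ))
      = ∑ l, Finsupp.single (k l) ((nseq j₀ : ℝ)⁻¹) := by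
    rw [Finset.smul_sum]
    refine Finset.sum_congr rfl fun l _ => ?_
    rw [Finsupp.smul_single, smul_eq_mul, mul_one]
  have hfx : fapply f ((nseq j₀ : ℝ)⁻¹ • ∑ l, Finsupp.single (k l) (1:ℝ))
      = (nseq j₀ : ℝ)⁻¹ * ∑ l, f (k l) := by
    rw [hxrw]
    have hms : fapply f (∑ l, Finsupp.single (k l) ((nseq j₀:ℝ)⁻¹))
        = ∑ l, fapply f (Finsupp.single (k l) ((nseq j₀:ℝ)⁻¹)) :=
      map_sum (⟨⟨fapply f, fapply_zero f⟩, fapply_add f⟩ : (ℕ →₀ ℝ) →+ ℝ) _ _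
    rw [hms]
    simp only [fapply_single]
    rw [← Finset.sum_mul, mul_comm]
  have hmain := hbound A (3*5^(j₀-1)) (le_refl _)
  obtain ⟨S', hS'⟩ : ∃ S', 3*5^(j₀-1) = S' + 1 := ⟨3*5^(j₀-1) - 1, by omega⟩
  have hr2 : (2:ℝ) ≤ (5 * (nseq (j₀-1):ℝ))/2 := by linarith
  have hgsum : ∑ t ∈ Finset.range (3*5^(j₀-1)), g t ≤ 2 * ((5 * (nseq (j₀-1):ℝ))/2) ^ S' := by
    calc ∑ t ∈ Finset.range (3*5^(j₀-1)), g t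
        ≤ ∑ t ∈ Finset.range (3*5^(j₀-1)), ((5 * (nseq (j₀-1):ℝ))/2)^t :=
          Finset.sum_le_sum fun t _ => hgle t
    _ ≤ 2 * ((5 * (nseq (j₀-1):ℝ))/2)^S' := by
          rw [hS']; exact geom_bound _ hr2 S'
  have hnj : (nseq j₀ : ℝ) = (5 * (nseq (j₀-1):ℝ)) ^ (3*5^(j₀-1)) := by
    rw [nseq_eq j₀ hj₀]; push_cast; ring
  have hrS : (nseq j₀:ℝ) * (1/2:ℝ)^(3*5^(j₀-1))
      = ((5 * (nseq (j₀-1):ℝ))/2) ^ (S'+1) := by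
    rw [hnj, mul_comm, half_pow_mul, hS']
  have hy0 : (0:ℝ) ≤ ((5 * (nseq (j₀-1):ℝ))/2) ^ S' := pow_nonneg (by linarith) S'
  have claim1 : (nseq (j₀-1):ℝ) * (∑ t ∈ Finset.range (3*5^(j₀-1)), g t)
      ≤ (nseq j₀:ℝ) * (1/2:ℝ)^(3*5^(j₀-1)) := by
    rw [hrS, pow_succ]
    have h1 : (nseq (j₀-1):ℝ) * (∑ t ∈ Finset.range (3*5^(j₀-1)), g t)
        ≤ (nseq (j₀-1):ℝ) * (2 * ((5 * (nseq (j₀-1):ℝ))/2) ^ S') :=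
      mul_le_mul_of_nonneg_left hgsum (by linarith)
    nlinarith
  have claim2 : ((1/2:ℝ)^(3*5^(j₀-1)) + b) * (A.card:ℝ)
      ≤ 2 * ((nseq j₀:ℝ) * (1/2:ℝ)^(3*5^(j₀-1))) := by
    rw [hAcard]
    nlinarith [hnjpos.le]
  have htotal : |∑ l, f (k l)| ≤ 3 * ((nseq j₀:ℝ) * (1/2:ℝ)^(3*5^(j₀-1))) := by
    rw [← hAsum]
    calc |∑ kk ∈ A, f kk|
        ≤ (nseq (j₀-1) : ℝ) * (∑ t ∈ Finset.range (3*5^(j₀-1)), g t)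
          + ((1/2 : ℝ) ^ (3*5^(j₀-1)) + b) * A.card := hmain
    _ ≤ 3 * ((nseq j₀:ℝ) * (1/2:ℝ)^(3*5^(j₀-1))) := by linarith
  rw [hfx, abs_mul, abs_of_nonneg (inv_nonneg.mpr hnjpos.le)]
  calc (nseq j₀:ℝ)⁻¹ * |∑ l, f (k l)|
      ≤ (nseq j₀:ℝ)⁻¹ * (3 * ((nseq j₀:ℝ) * (1/2:ℝ)^(3*5^(j₀-1)))) :=
        mul_le_mul_of_nonneg_left htotal (inv_nonneg.mpr hnjpos.le)
  _ = 3 * (1/2:ℝ)^(3*5^(j₀-1)) := by field_simp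
  _ ≤ 1 / (mseq j₀:ℝ)^2 := by
      have hm : (mseq j₀:ℝ) = (2:ℝ)^(5^(j₀-1)) := by rw [mseq]; push_cast; ring
      rw [hm, ← pow_mul]
      have e3 : 3*5^(j₀-1) = 5^(j₀-1)*2 + 5^(j₀-1) := by ring
      rw [e3, pow_add]
      have h32 : (1/2:ℝ)^(5^(j₀-1)) ≤ 1/32 := by
        calc (1/2:ℝ)^(5^(j₀-1)) ≤ (1/2:ℝ)^5 :=
              pow_le_pow_of_le_one (by norm_num) (by norm_num) hP5
        _ = 1/32 := by norm_num
      have hR : 1/((2:ℝ)^(5^(j₀-1)*2)) = ((1/2:ℝ))^(5^(j₀-1)*2) := by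
        rw [div_pow, one_pow]
      rw [hR]
      nlinarith [pow_nonneg (show (0:ℝ) ≤ (1/2:ℝ) by norm_num) (5^(j₀-1)*2),
        pow_nonneg (show (0:ℝ) ≤ (1/2:ℝ) by norm_num) (5^(j₀-1))]
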